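/- Let $(x_n)_{n=0}^N$ be a real-valued martingale and suppose the good-$\lambda$ type inequality $\lambda^2\,\mathbb P(S_N(x) \ge \beta\lambda) \le C\,\mathbb E\big[x_N^2\,\mathbf 1_{\{S_N(x) \ge \lambda\}}\big]$ holds for all $\lambda > 0$, where $\beta > 1$ and $C > 0$ are constants. Then for every $p > 2$ with $\mathbb E[S_N(x)^p] < \infty$, $\mathbb E[S_N(x)^p] \le \frac{p}{p-2}\,\frac{\beta^p C}{1}\,\mathbb E\big[S_N(x)^{p-2} x_N^2\big]$, and consequently $\|S_N(x)\|_{L^p} \le \big(\frac{p\,\beta^p C}{p-2}\big)^{1/2} \|x_N\|_{L^p}$. -/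

import Mathlib

open MeasureTheory Finset Set
open scoped ENNReal

private lemma aux_layercake {Ω : Type*} [MeasurableSpace Ω] (μ : Measure Ω) [SigmaFinite μ]
    (f : Ω → ℝ) (hf : Measurable f) (hf0 : ∀ ω, 0 ≤ f ω) (p : ℝ) (hp : 0 < p) :
    ∫⁻ ω, ENNReal.ofReal (f ω ^ p) ∂μ
      = ENNReal.ofReal p * ∫⁻ t in Ioi 0, μ {a | t ≤ f a} * ENNReal.ofReal (t ^ (p-1)) := by
  have hg : ∀ t > (0:ℝ), IntervalIntegrable (fun t : ℝ => t ^ (p-1)) volume 0 t := by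
    intro t ht
    apply intervalIntegral.intervalIntegrable_rpow'
    linarith
  have key := lintegral_comp_eq_lintegral_meas_le_mul μ (Filter.Eventually.of_forall hf0)
    hf.aemeasurable hg ((ae_restrict_iff' measurableSet_Ioi).mpr
      (Filter.Eventually.of_forall fun t ht => Real.rpow_nonneg (le_of_lt ht) _))
  rw [← key]
  have : ∀ ω, (∫ t in (0:ℝ)..f ω, t ^ (p-1)) = f ω ^ p / p := by
    intro ω
    rw [integral_rpow (Or.inl (by linarith))]
    rw [Real.zero_rpow (by linarith), sub_zero]
    ring_nf
  simp_rw [this]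
  rw [← lintegral_const_mul' _ _ ENNReal.ofReal_ne_top]
  congr 1
  ext ω
  rw [← ENNReal.ofReal_mul hp.le]
  congr 1
  field_simp

private lemma aux_ioc (s r : ℝ) (hs : 0 ≤ s) (hr : -1 < r) :
    ∫⁻ t in Ioc 0 s, ENNReal.ofReal (t ^ r) = ENNReal.ofReal (s ^ (r+1) / (r+1)) := by
  have hint : IntegrableOn (fun t : ℝ => t ^ r) (Ioc 0 s) volume := by
    have := (intervalIntegral.intervalIntegrable_rpow' (a := 0) (b := s) hr).1
    simpa using this
  rw [← ofReal_integral_eq_lintegral_ofReal hint ((ae_restrict_iff' measurableSet_Ioc).mpr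
      (Filter.Eventually.of_forall fun t ht => Real.rpow_nonneg ht.1.le _))]
  congr 1
  rw [← intervalIntegral.integral_of_le hs, integral_rpow (Or.inl hr),
    Real.zero_rpow (by linarith), sub_zero]

private lemma aux_swap {Ω : Type*} [MeasurableSpace Ω] (μ : Measure Ω) [SigmaFinite μ]
    (S' x' : Ω → ℝ) (hS' : Measurable S') (hx' : Measurable x') (r : ℝ) :
    ∫⁻ t in Ioi (0:ℝ), ENNReal.ofReal (t ^ r) * ∫⁻ ω in {ω | t ≤ S' ω}, ENNReal.ofReal (x' ω ^ 2) ∂μ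
      = ∫⁻ ω, (∫⁻ t in Ioc 0 (S' ω), ENNReal.ofReal (t ^ r)) * ENNReal.ofReal (x' ω ^ 2) ∂μ := by
  have hA : MeasurableSet {q : ℝ × Ω | q.1 ≤ S' q.2} :=
    measurableSet_le measurable_fst (hS'.comp measurable_snd)
  set G : ℝ × Ω → ℝ≥0∞ := fun q => ENNReal.ofReal (q.1 ^ r) * ENNReal.ofReal (x' q.2 ^ 2) with hG
  have hGm : Measurable G := by
    refine Measurable.mul (f := fun q : ℝ × Ω => ENNReal.ofReal (q.1 ^ r))
      (g := fun q : ℝ × Ω => ENNReal.ofReal (x' q.2 ^ 2)) ?_ ?_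
    · exact ENNReal.measurable_ofReal.comp (measurable_fst.pow measurable_const)
    · exact ENNReal.measurable_ofReal.comp ((hx'.comp measurable_snd).pow_const 2)
  set F : ℝ → Ω → ℝ≥0∞ := fun t ω => {q : ℝ × Ω | q.1 ≤ S' q.2}.indicator G (t, ω) with hF
  have hFm : Measurable (Function.uncurry F) := hGm.indicator hA
  have swap := lintegral_lintegral_swap (μ := volume.restrict (Ioi (0:ℝ))) (ν := μ)
    hFm.aemeasurable
  calc ∫⁻ t in Ioi (0:ℝ), ENNReal.ofReal (t ^ r) * ∫⁻ ω in {ω | t ≤ S' ω}, ENNReal.ofReal (x' ω ^ 2) ∂μ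
      = ∫⁻ t in Ioi (0:ℝ), ∫⁻ ω, F t ω ∂μ := by
        apply lintegral_congr
        intro t
        have h1 : (fun ω => F t ω) = ({ω | t ≤ S' ω}).indicator
            (fun ω => ENNReal.ofReal (t ^ r) * ENNReal.ofReal (x' ω ^ 2)) := by
          ext ω
          simp only [F, G, Set.indicator, mem_setOf_eq]
        rw [← lintegral_const_mul' _ _ ENNReal.ofReal_ne_top,
          ← lintegral_indicator (measurableSet_le measurable_const hS'), ← h1]
    _ = ∫⁻ ω, (∫⁻ t in Ioi (0:ℝ), F t ω) ∂μ := swap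
    _ = _ := by
        apply lintegral_congr
        intro ω
        have : (fun t => F t ω) = (Iic (S' ω)).indicator
            (fun t => ENNReal.ofReal (t ^ r) * ENNReal.ofReal (x' ω ^ 2)) := by
          ext t
          simp only [F, G, Set.indicator, mem_setOf_eq, Set.mem_Iic]
        rw [this, lintegral_indicator measurableSet_Iic,
          Measure.restrict_restrict measurableSet_Iic]
        have hset : Iic (S' ω) ∩ Ioi 0 = Ioc 0 (S' ω) := by
          ext t
          simp only [Set.mem_inter_iff, Set.mem_Iic, Set.mem_Ioi, Set.mem_Ioc]
          tauto
        rw [hset, lintegral_mul_const' _ _ ENNReal.ofReal_ne_top]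

theorem good_lambda_implies_Lp_bound
    {Ω : Type*} [m0 : MeasurableSpace Ω] {μ : Measure Ω} [IsProbabilityMeasure μ]
    (ℱ : Filtration ℕ m0) (x : ℕ → Ω → ℝ) (hx : Martingale x ℱ μ) (N : ℕ)
    (dx : ℕ → Ω → ℝ) (hdx0 : dx 0 = x 0)
    (hdx : ∀ k : ℕ, dx (k + 1) = x (k + 1) - x k)
    (S : ℕ → Ω → ℝ)
    (hS : ∀ n ω, S n ω = Real.sqrt (∑ k ∈ Finset.range (n + 1), dx k ω ^ 2))
    (β C : ℝ) (hβ : 1 < β) (hC : 0 < C)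
    (hgl : ∀ l : ℝ, 0 < l →
      l ^ 2 * (μ {ω | β * l ≤ S N ω}).toReal
        ≤ C * ∫ ω in {ω | l ≤ S N ω}, x N ω ^ 2 ∂μ)
    (p : ℝ) (hp : 2 < p)
    (hSp : Integrable (fun ω => S N ω ^ p) μ)
    (hxp : Integrable (fun ω => |x N ω| ^ p) μ)
    (hmix : Integrable (fun ω => S N ω ^ (p - 2) * x N ω ^ 2) μ) :
    (∫ ω, S N ω ^ p ∂μ)
        ≤ p / (p - 2) * β ^ p * C * ∫ ω, S N ω ^ (p - 2) * x N ω ^ 2 ∂μ ∧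
    (∫ ω, S N ω ^ p ∂μ) ^ (1 / p)
        ≤ (p * β ^ p * C / (p - 2)) ^ ((1 : ℝ) / 2)
          * (∫ ω, |x N ω| ^ p ∂μ) ^ (1 / p) := by
  have hβ0 : (0:ℝ) < β := lt_trans one_pos hβ
  have hp0 : (0:ℝ) < p := by linarith
  have hp2 : (0:ℝ) < p - 2 := by linarith
  have hβp : (0:ℝ) < β ^ p := Real.rpow_pos_of_pos hβ0 p
  -- measurability
  have hxm : Measurable (x N) := ((hx.stronglyMeasurable N).mono (ℱ.le N)).measurable
  have hdxm : ∀ k, Measurable (dx k) := by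
    intro k
    cases k with
    | zero =>
      rw [hdx0]; exact ((hx.stronglyMeasurable 0).mono (ℱ.le 0)).measurable
    | succ n =>
      rw [hdx n]
      exact ((hx.stronglyMeasurable (n+1)).mono (ℱ.le (n+1))).measurable.sub
        ((hx.stronglyMeasurable n).mono (ℱ.le n)).measurable
  have hSm : Measurable (S N) := by
    have hfun : S N = fun ω => Real.sqrt (∑ k ∈ Finset.range (N + 1), dx k ω ^ 2) :=
      funext (hS N)
    rw [hfun]
    exact (Finset.measurable_sum _ fun k _ => (hdxm k).pow_const 2).sqrt
  have hS0 : ∀ ω, 0 ≤ S N ω := fun ω => (hS N ω) ▸ Real.sqrt_nonneg _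
  -- integrability of x²
  have hx2 : Integrable (fun ω => x N ω ^ 2) μ := by
    refine ((integrable_const (1:ℝ)).add hxp).mono'
      ((hxm.pow_const 2).aestronglyMeasurable) (Filter.Eventually.of_forall fun ω => ?_)
    simp only [Pi.add_apply]
    have h1 : ‖x N ω ^ 2‖ = |x N ω| ^ (2:ℝ) := by
      rw [Real.norm_eq_abs, abs_pow, ← Real.rpow_natCast |x N ω| 2]
      norm_num
    rw [h1]
    rcases le_or_gt (|x N ω|) 1 with h | h
    · have : |x N ω| ^ (2:ℝ) ≤ 1 := Real.rpow_le_one (abs_nonneg _) h (by norm_num)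
      have h2 : (0:ℝ) ≤ |x N ω| ^ p := Real.rpow_nonneg (abs_nonneg _) p
      linarith
    · have : |x N ω| ^ (2:ℝ) ≤ |x N ω| ^ p :=
        Real.rpow_le_rpow_of_exponent_le h.le hp.le
      linarith
  -- ENNReal quantities
  set A := ∫⁻ ω, ENNReal.ofReal (S N ω ^ p) ∂μ with hA
  set B := ∫⁻ ω, ENNReal.ofReal (S N ω ^ (p - 2) * x N ω ^ 2) ∂μ with hB
  set K := p / (p - 2) * β ^ p * C with hKdef
  have hK : 0 < K := by positivity
  -- layercake for S/β
  have hlc := aux_layercake μ (fun ω => S N ω / β) (hSm.div_const β)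
    (fun ω => div_nonneg (hS0 ω) hβ0.le) p hp0
  have hsets : ∀ t : ℝ, {a | t ≤ S N a / β} = {ω | β * t ≤ S N ω} := by
    intro t
    ext ω
    simp only [mem_setOf_eq]
    rw [le_div_iff₀ hβ0, mul_comm]
  have hAeq : A = ENNReal.ofReal (β ^ p * p)
      * ∫⁻ t in Ioi (0:ℝ), μ {ω | β * t ≤ S N ω} * ENNReal.ofReal (t ^ (p-1)) := by
    have h1 : ∀ ω, ENNReal.ofReal (S N ω ^ p)
        = ENNReal.ofReal (β ^ p) * ENNReal.ofReal ((S N ω / β) ^ p) := by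
      intro ω
      rw [← ENNReal.ofReal_mul hβp.le]
      congr 1
      rw [Real.div_rpow (hS0 ω) hβ0.le]
      field_simp
    simp_rw [hA, h1]
    rw [lintegral_const_mul' _ _ ENNReal.ofReal_ne_top, hlc]
    simp_rw [hsets]
    rw [← mul_assoc, ← ENNReal.ofReal_mul hβp.le]
  -- pointwise good-lambda bound in ENNReal
  have hpt : ∀ t : ℝ, 0 < t →
      μ {ω | β * t ≤ S N ω} * ENNReal.ofReal (t ^ (p-1))
        ≤ ENNReal.ofReal C * (ENNReal.ofReal (t ^ (p-3))
            * ∫⁻ ω in {ω | t ≤ S N ω}, ENNReal.ofReal (x N ω ^ 2) ∂μ) := by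
    intro t ht
    have h1 : ENNReal.ofReal (t ^ 2 * (μ {ω | β * t ≤ S N ω}).toReal)
        ≤ ENNReal.ofReal (C * ∫ ω in {ω | t ≤ S N ω}, x N ω ^ 2 ∂μ) :=
      ENNReal.ofReal_le_ofReal (hgl t ht)
    rw [ENNReal.ofReal_mul (sq_nonneg t), ENNReal.ofReal_toReal (measure_ne_top μ _)] at h1
    rw [ENNReal.ofReal_mul hC.le,
      ofReal_integral_eq_lintegral_ofReal (hx2.restrict)
        (Filter.Eventually.of_forall fun ω => sq_nonneg _)] at h1
    calc μ {ω | β * t ≤ S N ω} * ENNReal.ofReal (t ^ (p-1))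
        = ENNReal.ofReal (t ^ (p-3)) * (ENNReal.ofReal (t ^ 2) * μ {ω | β * t ≤ S N ω}) := by
          rw [← mul_assoc, ← ENNReal.ofReal_mul (Real.rpow_nonneg ht.le _), mul_comm]
          congr 2
          have h2 : (t:ℝ) ^ (2:ℕ) = t ^ (2:ℝ) := by
            rw [← Real.rpow_natCast t 2]; norm_num
          rw [h2, ← Real.rpow_add ht]
          congr 1
          ring
      _ ≤ ENNReal.ofReal (t ^ (p-3)) * (ENNReal.ofReal C
            * ∫⁻ ω in {ω | t ≤ S N ω}, ENNReal.ofReal (x N ω ^ 2) ∂μ) :=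
          mul_le_mul_right h1 _
      _ = ENNReal.ofReal C * (ENNReal.ofReal (t ^ (p-3))
            * ∫⁻ ω in {ω | t ≤ S N ω}, ENNReal.ofReal (x N ω ^ 2) ∂μ) := by ring
  -- integrate the pointwise bound
  have hint : ∫⁻ t in Ioi (0:ℝ), μ {ω | β * t ≤ S N ω} * ENNReal.ofReal (t ^ (p-1))
      ≤ ENNReal.ofReal C * (ENNReal.ofReal (1/(p-2)) * B) := by
    calc ∫⁻ t in Ioi (0:ℝ), μ {ω | β * t ≤ S N ω} * ENNReal.ofReal (t ^ (p-1))
        ≤ ∫⁻ t in Ioi (0:ℝ), ENNReal.ofReal C * (ENNReal.ofReal (t ^ (p-3))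
            * ∫⁻ ω in {ω | t ≤ S N ω}, ENNReal.ofReal (x N ω ^ 2) ∂μ) := by
          refine lintegral_mono_ae ((ae_restrict_iff' measurableSet_Ioi).mpr
            (Filter.Eventually.of_forall fun t ht => hpt t ht))
      _ = ENNReal.ofReal C * ∫⁻ t in Ioi (0:ℝ), ENNReal.ofReal (t ^ (p-3))
            * ∫⁻ ω in {ω | t ≤ S N ω}, ENNReal.ofReal (x N ω ^ 2) ∂μ :=
          lintegral_const_mul' _ _ ENNReal.ofReal_ne_top
      _ = ENNReal.ofReal C * ∫⁻ ω, (∫⁻ t in Ioc 0 (S N ω), ENNReal.ofReal (t ^ (p-3)))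
            * ENNReal.ofReal (x N ω ^ 2) ∂μ := by
          rw [aux_swap μ (S N) (x N) hSm hxm (p-3)]
      _ = ENNReal.ofReal C * (ENNReal.ofReal (1/(p-2)) * B) := by
          congr 1
          have h3 : ∀ ω, (∫⁻ t in Ioc 0 (S N ω), ENNReal.ofReal (t ^ (p-3)))
              * ENNReal.ofReal (x N ω ^ 2)
              = ENNReal.ofReal (1/(p-2)) * ENNReal.ofReal (S N ω ^ (p-2) * x N ω ^ 2) := by
            intro ω
            rw [aux_ioc (S N ω) (p-3) (hS0 ω) (by linarith)]
            have h4 : p - 3 + 1 = p - 2 := by ring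
            rw [h4, ← ENNReal.ofReal_mul (div_nonneg (Real.rpow_nonneg (hS0 ω) _) hp2.le),
              ← ENNReal.ofReal_mul (by positivity : (0:ℝ) ≤ 1/(p-2))]
            congr 1
            ring
          simp_rw [h3]
          rw [lintegral_const_mul' _ _ ENNReal.ofReal_ne_top]
  -- main lintegral bound
  have hmain : A ≤ ENNReal.ofReal K * B := by
    rw [hAeq]
    calc ENNReal.ofReal (β ^ p * p)
          * ∫⁻ t in Ioi (0:ℝ), μ {ω | β * t ≤ S N ω} * ENNReal.ofReal (t ^ (p-1))
        ≤ ENNReal.ofReal (β ^ p * p)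
          * (ENNReal.ofReal C * (ENNReal.ofReal (1/(p-2)) * B)) := mul_le_mul_right hint _
      _ = ENNReal.ofReal K * B := by
          rw [← mul_assoc, ← mul_assoc, ← ENNReal.ofReal_mul (by positivity),
            ← ENNReal.ofReal_mul (by positivity)]
          congr 2
          rw [hKdef]
          ring
  -- convert to real integrals
  have hSnn : ∀ ω, 0 ≤ S N ω ^ p := fun ω => Real.rpow_nonneg (hS0 ω) p
  have hmixnn : ∀ ω, 0 ≤ S N ω ^ (p-2) * x N ω ^ 2 :=
    fun ω => mul_nonneg (Real.rpow_nonneg (hS0 ω) _) (sq_nonneg _)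
  have hIA : ∫ ω, S N ω ^ p ∂μ = A.toReal := by
    rw [hA, integral_eq_lintegral_of_nonneg_ae (Filter.Eventually.of_forall hSnn) hSp.1]
  have hIB : ∫ ω, S N ω ^ (p-2) * x N ω ^ 2 ∂μ = B.toReal := by
    rw [hB, integral_eq_lintegral_of_nonneg_ae (Filter.Eventually.of_forall hmixnn) hmix.1]
  have hBne : B ≠ ⊤ := by
    rw [hB, ← ofReal_integral_eq_lintegral_ofReal hmix
      (Filter.Eventually.of_forall hmixnn)]
    exact ENNReal.ofReal_ne_top
  have hfirst : (∫ ω, S N ω ^ p ∂μ)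
      ≤ p / (p - 2) * β ^ p * C * ∫ ω, S N ω ^ (p - 2) * x N ω ^ 2 ∂μ := by
    rw [hIA, hIB, ← hKdef]
    have := ENNReal.toReal_mono (by
      exact ENNReal.mul_ne_top ENNReal.ofReal_ne_top hBne) hmain
    rwa [ENNReal.toReal_mul, ENNReal.toReal_ofReal hK.le] at this
  refine ⟨hfirst, ?_⟩
  -- Hölder step
  have hq0 : (ENNReal.ofReal p) ≠ 0 := by
    simp only [ne_eq, ENNReal.ofReal_eq_zero, not_le]; linarith
  have hqt : (ENNReal.ofReal p) ≠ ⊤ := ENNReal.ofReal_ne_top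
  have hSmem : MemLp (S N) (ENNReal.ofReal p) μ := by
    rw [← memLp_norm_rpow_iff (q := ENNReal.ofReal p) hSm.aestronglyMeasurable hq0 hqt,
      ENNReal.div_self hq0 hqt, ENNReal.toReal_ofReal hp0.le, memLp_one_iff_integrable]
    exact hSp.congr (Filter.Eventually.of_forall fun ω => by
      simp only [Real.norm_eq_abs, abs_of_nonneg (hS0 ω)])
  have hxmem : MemLp (x N) (ENNReal.ofReal p) μ := by
    rw [← memLp_norm_rpow_iff (q := ENNReal.ofReal p) hxm.aestronglyMeasurable hq0 hqt,
      ENNReal.div_self hq0 hqt, ENNReal.toReal_ofReal hp0.le, memLp_one_iff_integrable]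
    exact hxp.congr (Filter.Eventually.of_forall fun ω => by simp only [Real.norm_eq_abs])
  have hfT : MemLp (fun ω => S N ω ^ (p - 2)) (ENNReal.ofReal (p / (p - 2))) μ := by
    have h1 := (memLp_norm_rpow_iff (q := ENNReal.ofReal (p - 2)) (p := ENNReal.ofReal p)
      hSm.aestronglyMeasurable (by simp only [ne_eq, ENNReal.ofReal_eq_zero, not_le]; linarith)
      ENNReal.ofReal_ne_top).mpr hSmem
    rw [ENNReal.toReal_ofReal hp2.le, ← ENNReal.ofReal_div_of_pos hp2] at h1
    refine (memLp_congr_ae (Filter.Eventually.of_forall fun ω => ?_)).mp h1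
    simp only [Real.norm_eq_abs, abs_of_nonneg (hS0 ω)]
  have hgT : MemLp (fun ω => x N ω ^ 2) (ENNReal.ofReal (p / 2)) μ := by
    have h1 := (memLp_norm_rpow_iff (q := ENNReal.ofReal 2) (p := ENNReal.ofReal p)
      hxm.aestronglyMeasurable (by simp) ENNReal.ofReal_ne_top).mpr hxmem
    rw [ENNReal.toReal_ofReal (by norm_num : (0:ℝ) ≤ 2),
      ← ENNReal.ofReal_div_of_pos (by norm_num : (0:ℝ) < 2)] at h1
    refine (memLp_congr_ae (Filter.Eventually.of_forall fun ω => ?_)).mp h1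
    have habs : ∀ a : ℝ, |a| ^ (2:ℝ) = a ^ 2 := fun a => by
      rw [show (2:ℝ) = ((2:ℕ):ℝ) by norm_num, Real.rpow_natCast, sq_abs]
    simp only [Real.norm_eq_abs, habs]
  have hconj : Real.HolderConjugate (p / (p - 2)) (p / 2) := by
    refine ⟨?_, by positivity, by positivity⟩
    rw [inv_div, inv_div, inv_one, ← add_div, sub_add_cancel, div_self hp0.ne']
  have hH := integral_mul_le_Lp_mul_Lq_of_nonneg hconj
    (f := fun ω => S N ω ^ (p - 2)) (g := fun ω => x N ω ^ 2)
    (Filter.Eventually.of_forall fun ω => Real.rpow_nonneg (hS0 ω) _)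
    (Filter.Eventually.of_forall fun ω => sq_nonneg _) hfT hgT
  set I := ∫ ω, S N ω ^ p ∂μ with hIdef
  set J := ∫ ω, |x N ω| ^ p ∂μ with hJdef
  have hI0 : 0 ≤ I := integral_nonneg hSnn
  have hJ0 : 0 ≤ J := integral_nonneg fun ω => Real.rpow_nonneg (abs_nonneg _) p
  have hH' : (∫ ω, S N ω ^ (p - 2) * x N ω ^ 2 ∂μ)
      ≤ I ^ ((p - 2) / p) * J ^ (2 / p) := by
    have e1 : ∀ ω, (S N ω ^ (p - 2)) ^ (p / (p - 2)) = S N ω ^ p := by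
      intro ω
      rw [← Real.rpow_mul (hS0 ω)]
      congr 1
      field_simp
    have e2 : ∀ ω, (x N ω ^ 2) ^ (p / 2) = |x N ω| ^ p := by
      intro ω
      have h5 : (x N ω : ℝ) ^ (2:ℕ) = |x N ω| ^ ((2:ℕ) : ℝ) := by
        rw [Real.rpow_natCast]
        rw [sq_abs]
      rw [h5, ← Real.rpow_mul (abs_nonneg _)]
      congr 1
      push_cast
      field_simp
    have e3 : 1 / (p / (p - 2)) = (p - 2) / p := one_div_div _ _
    have e4 : 1 / (p / 2) = 2 / p := one_div_div _ _
    simp_rw [e1, e2, e3, e4] at hH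
    exact hH
  have hKeq : p * β ^ p * C / (p - 2) = K := by rw [hKdef]; ring
  rw [hKeq]
  rcases eq_or_lt_of_le hI0 with hI | hI
  · rw [← hI, Real.zero_rpow (by positivity : 1 / p ≠ 0)]
    exact mul_nonneg (Real.rpow_nonneg hK.le _) (Real.rpow_nonneg hJ0 _)
  · have hcomb : I ≤ I ^ ((p - 2) / p) * (K * J ^ (2 / p)) := by
      calc I ≤ K * ∫ ω, S N ω ^ (p - 2) * x N ω ^ 2 ∂μ := hfirst
        _ ≤ K * (I ^ ((p - 2) / p) * J ^ (2 / p)) := by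
            exact mul_le_mul_of_nonneg_left hH' hK.le
        _ = I ^ ((p - 2) / p) * (K * J ^ (2 / p)) := by ring
    have hIsplit : I = I ^ ((p - 2) / p) * I ^ (2 / p) := by
      rw [← Real.rpow_add hI]
      have : (p - 2) / p + 2 / p = 1 := by field_simp; ring
      rw [this, Real.rpow_one]
    have hpow : I ^ ((p - 2) / p) > 0 := Real.rpow_pos_of_pos hI _
    have key : I ^ (2 / p) ≤ K * J ^ (2 / p) := by
      have h6 : I ^ ((p - 2) / p) * I ^ (2 / p) ≤ I ^ ((p - 2) / p) * (K * J ^ (2 / p)) := by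
        rw [← hIsplit]
        exact hcomb
      exact le_of_mul_le_mul_left h6 hpow
    have step : (I ^ (2 / p)) ^ ((1:ℝ) / 2) ≤ (K * J ^ (2 / p)) ^ ((1:ℝ) / 2) :=
      Real.rpow_le_rpow (Real.rpow_nonneg hI0 _) key (by norm_num)
    have eL : (I ^ (2 / p)) ^ ((1:ℝ) / 2) = I ^ (1 / p) := by
      rw [← Real.rpow_mul hI0]
      congr 1
      ring
    have eR : (K * J ^ (2 / p)) ^ ((1:ℝ) / 2)
        = K ^ ((1:ℝ) / 2) * J ^ (1 / p) := by
      rw [Real.mul_rpow hK.le (Real.rpow_nonneg hJ0 _), ← Real.rpow_mul hJ0]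
      congr 2
      ring
    rw [eL, eR] at step
    exact step
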